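/- Let X be a nonnegative real-valued random variable on a probability space such that X and X² are integrable, with mean μ = E[X] > 0 and variance σ² = Var(X) > 0. Then |E[e^{−X}] − e^{−μ}(1 + σ²/2)| < σ²(1 − e^{−μ} − μe^{−μ})/μ²; that is, the absolute error of the variance-corrected approximation e^{−μ}(1 + σ²/2) to the void probability E[e^{−X}] is strictly smaller than the maximum error bound σ²(1 − e^{−μ} − μe^{−μ})/μ² of the Jensen lower-bound approximation e^{−μ}. -/

import Mathlib

open MeasureTheory ProbabilityTheory


private lemma Gmono {u v : ℝ} (h : u ≤ v) :
    (∫ t in (0:ℝ)..1, (1 - t) * Real.exp (t * u)) ≤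
      ∫ t in (0:ℝ)..1, (1 - t) * Real.exp (t * v) := by
  apply intervalIntegral.integral_mono_on zero_le_one
  · exact (Continuous.intervalIntegrable (by continuity) _ _)
  · exact (Continuous.intervalIntegrable (by continuity) _ _)
  · intro t ht
    simp only [Set.mem_Icc] at ht
    have h1t : 0 ≤ 1 - t := by linarith [ht.2]
    have : Real.exp (t*u) ≤ Real.exp (t*v) :=
      Real.exp_le_exp.2 (mul_le_mul_of_nonneg_left h ht.1)
    nlinarith

private lemma Geq (b : ℝ) :
    b^2 * (∫ t in (0:ℝ)..1, (1 - t) * Real.exp (t * b)) = Real.exp b - 1 - b := by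
  rcases eq_or_ne b 0 with rfl | hb
  · simp
  · have hder : ∀ t ∈ Set.uIcc (0:ℝ) 1,
        HasDerivAt (fun t => (1-t) * Real.exp (t*b)/b + Real.exp (t*b)/b^2)
          ((1-t) * Real.exp (t*b)) t := by
      intro t _
      have h1 : HasDerivAt (fun t : ℝ => t * b) b t := by
        simpa using (hasDerivAt_id t).mul_const b
      have hexp : HasDerivAt (fun t : ℝ => Real.exp (t*b)) (Real.exp (t*b) * b) t := h1.exp
      have h2 : HasDerivAt (fun t : ℝ => 1 - t) (-1) t := by
        simpa using (hasDerivAt_id t).const_sub (1:ℝ)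
      have := ((h2.mul hexp).div_const b).add (hexp.div_const (b^2))
      refine this.congr_deriv ?_
      field_simp
      ring
    have hint : IntervalIntegrable (fun t : ℝ => (1-t) * Real.exp (t*b)) volume 0 1 :=
      Continuous.intervalIntegrable (by continuity) _ _
    rw [intervalIntegral.integral_eq_sub_of_hasDerivAt hder hint]
    field_simp
    simp only [mul_zero, Real.exp_zero]
    ring

private lemma keylem {u v : ℝ} (h : u ≤ v) :
    v^2 * (Real.exp u - 1 - u) ≤ u^2 * (Real.exp v - 1 - v) := by
  rw [← Geq u, ← Geq v]
  nlinarith [mul_le_mul_of_nonneg_left (Gmono h) (mul_nonneg (sq_nonneg u) (sq_nonneg v))]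

private lemma pointA (μ x : ℝ) :
    0 ≤ Real.exp (-x) - Real.exp (-μ) + Real.exp (-μ) * (x - μ) := by
  have h := Real.add_one_le_exp (μ - x)
  have e1 : Real.exp (μ - x) * Real.exp (-μ) = Real.exp (-x) := by
    rw [← Real.exp_add]; ring_nf
  nlinarith [mul_le_mul_of_nonneg_right h (Real.exp_pos (-μ)).le]

private lemma pointB {μ x : ℝ} (hμ : 0 < μ) (hx : 0 ≤ x) :
    μ^2 * (Real.exp (-x) - Real.exp (-μ) + Real.exp (-μ) * (x - μ)) ≤
      (1 - Real.exp (-μ) - μ * Real.exp (-μ)) * (x - μ)^2 := by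
  have hk := keylem (u := μ - x) (v := μ) (by linarith)
  have e1 : Real.exp (μ - x) * Real.exp (-μ) = Real.exp (-x) := by
    rw [← Real.exp_add]; ring_nf
  have e2 : Real.exp μ * Real.exp (-μ) = 1 := by
    rw [← Real.exp_add]; simp
  nlinarith [mul_le_mul_of_nonneg_right hk (Real.exp_pos (-μ)).le,
    mul_le_mul_of_nonneg_right (le_of_eq e1) (sq_nonneg μ),
    mul_le_mul_of_nonneg_right (le_of_eq e2) (sq_nonneg (x-μ))]

private lemma quadstrict {μ : ℝ} (hμ : 0 < μ) : 1 + μ + μ^2/2 < Real.exp μ := by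
  have h := Real.sum_le_exp_of_nonneg hμ.le 4
  have hs : ∑ i ∈ Finset.range 4, μ ^ i / (i.factorial : ℝ) = 1 + μ + μ^2/2 + μ^3/6 := by
    norm_num [Finset.sum_range_succ, Nat.factorial]
  rw [hs] at h
  nlinarith [pow_pos hμ 3]


/-- for a nonnegative integrable random variable X with integrable square,
mean μ > 0 and variance σ² > 0, the absolute error of the variance-corrected
approximation e^{−μ}(1 + σ²/2) to E[e^{−X}] is strictly smaller than
σ²(1 − e^{−μ} − μe^{−μ})/μ². -/
theorem stmt_1 {Ω : Type*} [MeasurableSpace Ω] (P : Measure Ω) [IsProbabilityMeasure P]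
    (X : Ω → ℝ) (hXnn : ∀ ω, 0 ≤ X ω)
    (hX1 : Integrable X P) (hX2 : Integrable (fun ω => X ω ^ 2) P)
    (hmean : 0 < ∫ ω, X ω ∂P) (hvar : 0 < variance X P) :
    |(∫ ω, Real.exp (-X ω) ∂P) -
        Real.exp (-(∫ ω, X ω ∂P)) * (1 + variance X P / 2)| <
      variance X P *
        (1 - Real.exp (-(∫ ω, X ω ∂P)) -
          (∫ ω, X ω ∂P) * Real.exp (-(∫ ω, X ω ∂P))) / (∫ ω, X ω ∂P)^2 := by
  set μ := ∫ ω, X ω ∂P with hμdef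
  set v := variance X P with hvdef
  set B := 1 - Real.exp (-μ) - μ * Real.exp (-μ) with hBdef
  have hμ : 0 < μ := hmean
  have hμ2 : 0 < μ^2 := pow_pos hμ 2
  have hE : 0 < Real.exp (-μ) := Real.exp_pos _
  have hXm : AEStronglyMeasurable X P := hX1.aestronglyMeasurable
  have hMem : MemLp X 2 P := (memLp_two_iff_integrable_sq hXm).2 hX2
  -- variance as an integral
  have hvar_eq : v = ∫ ω, (X ω - μ)^2 ∂P := by
    rw [hvdef, variance_eq_integral hXm.aemeasurable]
  -- integrability facts
  have hexp : Integrable (fun ω => Real.exp (-X ω)) P := by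
    apply Integrable.mono' (integrable_const (1:ℝ))
    · exact (Real.continuous_exp.comp continuous_neg).comp_aestronglyMeasurable hXm
    · filter_upwards with ω
      rw [Real.norm_eq_abs, abs_of_pos (Real.exp_pos _)]
      exact Real.exp_le_one_iff.2 (by linarith [hXnn ω])
  have hsq : Integrable (fun ω => (X ω - μ)^2) P := by
    have : (fun ω => (X ω - μ)^2) = fun ω => X ω^2 - (2*μ)*X ω + μ^2 := by
      funext ω; ring
    rw [this]
    exact (hX2.sub (hX1.const_mul (2*μ))).add (integrable_const _)
  have hf : Integrable
      (fun ω => Real.exp (-X ω) - Real.exp (-μ) + Real.exp (-μ) * (X ω - μ)) P :=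
    (hexp.sub (integrable_const _)).add ((hX1.sub (integrable_const μ)).const_mul _)

  -- the Jensen gap G
  have h1 : Integrable (fun ω => Real.exp (-X ω) - Real.exp (-μ)) P :=
    hexp.sub (integrable_const _)
  have h2 : Integrable (fun ω => Real.exp (-μ) * (X ω - μ)) P :=
    (hX1.sub (integrable_const μ)).const_mul _
  have hGval : (∫ ω, (Real.exp (-X ω) - Real.exp (-μ) + Real.exp (-μ) * (X ω - μ)) ∂P)
      = (∫ ω, Real.exp (-X ω) ∂P) - Real.exp (-μ) := by
    rw [integral_add h1 h2, integral_sub hexp (integrable_const _), integral_const_mul,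
      integral_sub hX1 (integrable_const μ), integral_const]
    simp [← hμdef]
  have hG0 : 0 ≤ (∫ ω, Real.exp (-X ω) ∂P) - Real.exp (-μ) := by
    rw [← hGval]
    exact integral_nonneg fun ω => pointA μ (X ω)
  have hGB : μ^2 * ((∫ ω, Real.exp (-X ω) ∂P) - Real.exp (-μ)) ≤ B * v := by
    rw [← hGval, ← integral_const_mul, hvar_eq, ← integral_const_mul]
    exact integral_mono (hf.const_mul _) (hsq.const_mul _)
      fun ω => pointB hμ (hXnn ω)
  -- scalar facts
  have hq := quadstrict hμ
  have e2 : Real.exp μ * Real.exp (-μ) = 1 := by rw [← Real.exp_add]; simp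
  have hcK : μ^2 * Real.exp (-μ) / 2 < B := by
    nlinarith [mul_lt_mul_of_pos_right hq hE]
  -- assemble
  rw [abs_lt]
  have key1 : Real.exp (-μ) * v / 2 < v * B / μ^2 := by
    rw [lt_div_iff₀ hμ2]
    nlinarith [mul_lt_mul_of_pos_left hcK hvar]
  have key2 : (∫ ω, Real.exp (-X ω) ∂P) - Real.exp (-μ) ≤ v * B / μ^2 := by
    rw [le_div_iff₀ hμ2]
    nlinarith [hGB]
  have hpos : 0 < Real.exp (-μ) * v / 2 := by positivity
  constructor
  · nlinarith [hG0, key1]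
  · nlinarith [key2, hpos]
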